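/- Let A be a unital C*-algebra and let a be a positive element of A. Then a belongs to the center of A if and only if |φ(u a)| ≤ φ(a) for every unitary element u of A and every positive continuous linear functional φ on A. -/

import Mathlib

open scoped ComplexOrder

namespace GardnerAux

open Complex NormedSpace

variable {A : Type*} [CStarAlgebra A]


/-- Positive functionals are hermitian. -/
lemma herm (φ : A →L[ℂ] ℂ) (hφ : ∀ x : A, 0 ≤ φ (star x * x)) (x y : A) :
    φ (star y * x) = (starRingEnd ℂ) (φ (star x * y)) := by
  have him : ∀ z : A, (φ (star z * z)).im = 0 := fun z =>
    ((Complex.nonneg_iff.mp (hφ z)).2).symm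
  set s := φ (star x * y) with hs
  set t := φ (star y * x) with ht
  have key1 : s.im + t.im = 0 := by
    have h1 := him (x + y)
    have e1 : star (x + y) * (x + y) = star x * x + star x * y + star y * x + star y * y := by
      rw [star_add]; noncomm_ring
    rw [e1] at h1
    simp only [map_add, Complex.add_im, ← hs, ← ht, him x, him y] at h1
    linarith
  have key2 : s.re - t.re = 0 := by
    have h2 := him (x + I • y)
    have e2 : star (x + I • y) * (x + I • y)
        = star x * x + I • (star x * y) + (-I) • (star y * x) + star y * y := by
      rw [star_add, star_smul, Complex.star_def, Complex.conj_I]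
      simp only [add_mul, mul_add, smul_mul_assoc, mul_smul_comm, smul_smul, neg_mul,
        smul_add, Complex.I_mul_I, neg_neg, one_smul, neg_smul]
      match_scalars <;> simp [Complex.I_sq]
    rw [e2] at h2
    simp only [map_add, map_smul, smul_eq_mul, Complex.add_im, Complex.mul_im, ← hs, ← ht,
      Complex.neg_re, Complex.neg_im, Complex.I_re, Complex.I_im, him x, him y] at h2
    linarith
  refine Complex.ext ?_ ?_ <;> simp [Complex.conj_re, Complex.conj_im] <;> linarith

lemma herm' (φ : A →L[ℂ] ℂ) (hφ : ∀ x : A, 0 ≤ φ (star x * x)) (z : A) :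
    φ (star z) = (starRingEnd ℂ) (φ z) := by
  have := herm φ hφ z 1
  simp only [star_one, one_mul, mul_one] at this
  rw [this]
  simp


/-- Cauchy–Schwarz for positive functionals. -/
lemma cs (φ : A →L[ℂ] ℂ) (hφ : ∀ x : A, 0 ≤ φ (star x * x)) (x y : A) :
    (‖φ (star x * y)‖)^2 ≤ (φ (star x * x)).re * (φ (star y * y)).re := by
  set c := φ (star x * y) with hc
  set ω : ℂ := if c = 0 then 1 else (starRingEnd ℂ) c / ((‖c‖ : ℝ) : ℂ) with hω
  have hωc : ω * c = ((‖c‖ : ℝ) : ℂ) := by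
    by_cases h : c = 0
    · simp [hω, h]
    · have habs : ((‖c‖ : ℝ) : ℂ) ≠ 0 := by simpa using h
      rw [hω, if_neg h, div_mul_eq_mul_div, mul_comm, Complex.mul_conj,
        Complex.normSq_eq_norm_sq]
      push_cast
      rw [pow_two]
      field_simp
  have hω1 : (starRingEnd ℂ) ω * ω = 1 := by
    by_cases h : c = 0
    · simp [hω, h]
    · rw [hω, if_neg h]
      simp only [map_div₀, Complex.conj_conj, Complex.conj_ofReal]
      have habs : ((‖c‖ : ℝ) : ℂ) ≠ 0 := by simpa using h
      rw [div_mul_div_comm, Complex.mul_conj, Complex.normSq_eq_norm_sq]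
      push_cast
      rw [pow_two, div_self (by simpa using mul_ne_zero habs habs)]
  have expand : ∀ r : ℝ, φ (star (x - (r:ℂ) • (ω • y)) * (x - (r:ℂ) • (ω • y)))
      = φ (star x * x) - ((2 * r * ‖c‖ : ℝ) : ℂ)
        + ((r^2 : ℝ) : ℂ) * φ (star y * y) := by
    intro r
    have e : star (x - (r:ℂ) • (ω • y)) * (x - (r:ℂ) • (ω • y))
        = star x * x - ((r:ℂ) * ω) • (star x * y)
          - ((r:ℂ) * (starRingEnd ℂ) ω) • (star y * x)
          + ((r:ℂ) * (r:ℂ) * ((starRingEnd ℂ) ω * ω)) • (star y * y) := by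
      rw [star_sub, star_smul, star_smul, Complex.star_def, Complex.conj_ofReal,
        ]
      simp only [sub_mul, mul_sub, smul_mul_assoc, mul_smul_comm, smul_smul]
      match_scalars <;> ring
    rw [e]
    have hherm : φ (star y * x) = (starRingEnd ℂ) c := herm φ hφ x y
    simp only [map_add, map_sub, map_smul, smul_eq_mul, hherm, ← hc, hω1, mul_one]
    have h1 : (r:ℂ) * ω * c = r * ((‖c‖ : ℝ) : ℂ) := by rw [mul_assoc, hωc]
    have h2 : (r:ℂ) * (starRingEnd ℂ) ω * (starRingEnd ℂ) c
        = r * ((‖c‖ : ℝ) : ℂ) := by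
      rw [mul_assoc, ← map_mul, hωc]
      simp [Complex.conj_ofReal]
    rw [h1, h2]
    push_cast
    ring
  have hquad : ∀ r : ℝ, 0 ≤ (φ (star y * y)).re * (r * r)
      + (-(2 * ‖c‖)) * r + (φ (star x * x)).re := by
    intro r
    have h0 := (Complex.nonneg_iff.mp (hφ (x - (r:ℂ) • (ω • y)))).1
    rw [expand r] at h0
    simp only [Complex.add_re, Complex.sub_re, Complex.mul_re, Complex.ofReal_re,
      Complex.ofReal_im, zero_mul, sub_zero] at h0
    nlinarith [h0]
  have hd := discrim_le_zero hquad
  rw [discrim] at hd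
  nlinarith [hd, norm_nonneg (φ (star x * y))]


section Order

variable [PartialOrder A] [StarOrderedRing A]

lemma rsmul_nonneg {x : A} (hx : 0 ≤ x) {r : ℝ} (hr : 0 ≤ r) : 0 ≤ r • x := by
  have hs : IsSelfAdjoint (CFC.sqrt x) := IsSelfAdjoint.of_nonneg (CFC.sqrt_nonneg x)
  have hss : CFC.sqrt x * CFC.sqrt x = x := CFC.sqrt_mul_sqrt_self x hx
  have key : r • x = star ((Real.sqrt r : ℂ) • CFC.sqrt x)
      * ((Real.sqrt r : ℂ) • CFC.sqrt x) := by
    rw [star_smul, hs.star_eq, Complex.star_def, Complex.conj_ofReal,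
      smul_mul_assoc, mul_smul_comm, smul_smul, hss, ← Complex.ofReal_mul,
      Real.mul_self_sqrt hr, Complex.coe_smul]
  rw [key]
  exact star_mul_self_nonneg _

lemma convex_nonneg : Convex ℝ {x : A | 0 ≤ x} := fun _ hx _ hy s t hs ht _ =>
  add_nonneg (rsmul_nonneg hx hs) (rsmul_nonneg hy ht)

lemma exists_pos_functional {w : A} (hw : IsSelfAdjoint w) (hnot : ¬ 0 ≤ w) :
    ∃ φ : A →L[ℂ] ℂ, (∀ x : A, 0 ≤ φ (star x * x)) ∧ (φ w).re < 0 := by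
  obtain ⟨f, u, hfw, hfP⟩ := geometric_hahn_banach_point_closed
    (convex_nonneg (A := A)) CStarAlgebra.isClosed_nonneg hnot
  clear hnot
  have hu0 : u < 0 := by simpa using hfP 0 le_rfl
  have hfpos : ∀ p : A, 0 ≤ p → 0 ≤ f p := by
    intro p hp
    by_contra hneg
    push_neg at hneg
    have htpos : 0 < (u - 1) / f p := div_pos_of_neg_of_neg (by linarith) hneg
    have h1 := hfP (((u - 1) / f p) • p) (rsmul_nonneg hp htpos.le)
    rw [map_smul, smul_eq_mul, div_mul_cancel₀ _ hneg.ne] at h1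
    linarith
  have hstar_smul : ∀ (r : ℝ) (x : A), star (r • x) = r • star x := by
    intro r x
    rw [← Complex.coe_smul, ← Complex.coe_smul, star_smul, Complex.star_def,
      Complex.conj_ofReal]
  let S : A →L[ℝ] A := LinearMap.mkContinuous
    { toFun := star, map_add' := star_add, map_smul' := hstar_smul } 1
    (fun x => by simp [norm_star])
  let g : A →L[ℝ] ℝ := f + f.comp S
  have hg : ∀ x : A, g x = f x + f (star x) := fun _ => rfl
  have hgsa : ∀ z : A, IsSelfAdjoint z → g z = 2 * f z := by
    intro z hz
    rw [hg, hz.star_eq]; ring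
  have hgI : ∀ z : A, IsSelfAdjoint z → g (Complex.I • z) = 0 := by
    intro z hz
    have hst : star (Complex.I • z) = -(Complex.I • z) := by
      rw [star_smul, Complex.star_def, Complex.conj_I, hz.star_eq, neg_smul]
    rw [hg, hst, map_neg]; ring
  have happ : ∀ y : A, g.extendTo𝕜' y
      = (g y : ℂ) - Complex.I * (g (Complex.I • y) : ℂ) := by
    intro y
    show (StrongDual.extendRCLike g y : ℂ) = _
    rfl
  refine ⟨g.extendTo𝕜', fun x => ?_, ?_⟩
  · have hsa : IsSelfAdjoint (star x * x) := IsSelfAdjoint.star_mul_self x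
    rw [happ, hgI _ hsa, hgsa _ hsa, Complex.nonneg_iff]
    have := hfpos _ (star_mul_self_nonneg x)
    constructor
    · simp only [Complex.ofReal_zero, mul_zero, sub_zero, Complex.ofReal_re]
      linarith
    · simp
  · rw [happ, hgI _ hw, hgsa _ hw]
    simp only [Complex.ofReal_zero, mul_zero, sub_zero, Complex.ofReal_re]
    linarith

lemma eq_zero_of_all_pos {w : A} (hw : IsSelfAdjoint w)
    (h0 : ∀ φ : A →L[ℂ] ℂ, (∀ x : A, 0 ≤ φ (star x * x)) → φ w = 0) : w = 0 := by
  have h1 : 0 ≤ w := by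
    by_contra hn
    obtain ⟨φ, hφ, hlt⟩ := exists_pos_functional hw hn
    rw [h0 φ hφ] at hlt
    simp at hlt
  have h2 : 0 ≤ -w := by
    by_contra hn
    obtain ⟨φ, hφ, hlt⟩ := exists_pos_functional hw.neg hn
    rw [map_neg, h0 φ hφ] at hlt
    simp at hlt
  exact le_antisymm (by simpa using h2) h1

end Order


lemma star_rsmul (r : ℝ) (x : A) : star (r • x) = r • star x := by
  rw [← Complex.coe_smul, ← Complex.coe_smul, star_smul, Complex.star_def,
    Complex.conj_ofReal]

lemma im_eq_zero (a : A) (ha : IsSelfAdjoint a)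
    (hyp : ∀ u ∈ unitary A, ∀ φ : A →L[ℂ] ℂ, (∀ x : A, 0 ≤ φ (star x * x)) →
      ((‖φ (u * a)‖ : ℝ) : ℂ) ≤ φ a)
    (φ : A →L[ℂ] ℂ) (hφ : ∀ x : A, 0 ≤ φ (star x * x)) {h : A}
    (hh : IsSelfAdjoint h) : (φ (h * a)).im = 0 := by
  set x : A := Complex.I • h with hx
  have hmem : ∀ t : ℝ, exp (t • x) ∈ unitary A := by
    intro t
    have h1 : t • x = Complex.I • (t • h) := by rw [hx, smul_comm]
    have h2 : Complex.I • (t • h) ∈ skewAdjoint A :=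
      (IsSelfAdjoint.smul (star_trivial t) hh).smul_mem_skewAdjoint Complex.conj_I
    let +nondep : NormedAlgebra ℚ A := .restrictScalars ℚ ℂ A
    have h3 := exp_mem_unitary_of_mem_skewAdjoint h2
    rw [h1]
    exact h3
  have hder1 : HasDerivAt (fun t : ℝ => exp (t • x)) x 0 := by
    simpa using hasDerivAt_exp_smul_const' (𝕂 := ℝ) x (0 : ℝ)
  have hder2 : HasDerivAt (fun t : ℝ => exp (t • x) * a) (x * a) 0 := hder1.mul_const a
  set L : A →L[ℝ] ℝ := Complex.reCLM.comp (φ.restrictScalars ℝ) with hL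
  have hLa : ∀ z : A, L z = (φ z).re := fun _ => rfl
  have hder3 : HasDerivAt (fun t : ℝ => L (exp (t • x) * a)) (L (x * a)) 0 :=
    L.hasFDerivAt.comp_hasDerivAt 0 hder2
  have hmax : IsLocalMax (fun t : ℝ => L (exp (t • x) * a)) 0 := by
    apply Filter.Eventually.of_forall
    intro t
    have hu := hyp _ (hmem t) φ hφ
    rw [Complex.le_def] at hu
    have h1 : (φ (exp (t • x) * a)).re ≤ (φ a).re :=
      le_trans (Complex.re_le_norm _) (by simpa using hu.1)
    simpa [hLa, zero_smul, NormedSpace.exp_zero, one_mul] using h1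
  have hzero := hmax.hasDerivAt_eq_zero hder3
  have hxa : x * a = Complex.I • (h * a) := smul_mul_assoc _ _ _
  rw [hxa, hLa] at hzero
  rw [map_smul, smul_eq_mul] at hzero
  simpa [Complex.mul_re] using hzero

end GardnerAux

open GardnerAux in
/-- Gardner-type characterization in a unital C*-algebra: a positive element `a` is
central iff `|φ(ua)| ≤ φ(a)` for every unitary `u` and every positive functional `φ`. -/
theorem central_iff_abs_phi_unitary_le {A : Type*} [CStarAlgebra A]
    (a : A) (hapos : ∃ b : A, a = star b * b) :
    (∀ b : A, a * b = b * a) ↔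
      ∀ u ∈ unitary A, ∀ φ : A →L[ℂ] ℂ, (∀ x : A, 0 ≤ φ (star x * x)) →
        ((‖φ (u * a)‖ : ℝ) : ℂ) ≤ φ a := by
  letI := CStarAlgebra.spectralOrder A
  letI := CStarAlgebra.spectralOrderedRing A
  obtain ⟨b, hb⟩ := hapos
  have ha : IsSelfAdjoint a := by rw [hb]; exact IsSelfAdjoint.star_mul_self b
  have hapos' : 0 ≤ a := hb ▸ star_mul_self_nonneg b
  constructor
  · intro hcomm u hu φ hφ
    set s := CFC.sqrt a with hsdef
    have hs : IsSelfAdjoint s := IsSelfAdjoint.of_nonneg (CFC.sqrt_nonneg a)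
    have hss : s * s = a := CFC.sqrt_mul_sqrt_self a hapos'
    have h1 : star (s * star u) * s = u * a := by
      rw [star_mul, star_star, hs.star_eq, mul_assoc, hss]
    have h2 : star (s * star u) * (s * star u) = a := by
      rw [star_mul, star_star, hs.star_eq]
      calc u * s * (s * star u) = u * (s * s * star u) := by
            rw [mul_assoc, ← mul_assoc s s (star u)]
        _ = u * (star u * a) := by rw [hss, hcomm (star u)]
        _ = a := by rw [← mul_assoc, Unitary.mul_star_self_of_mem hu, one_mul]
    have h3 := cs φ hφ (s * star u) s
    rw [h1, h2, hs.star_eq, hss] at h3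
    have hφa : 0 ≤ φ a := by
      have h4 := hφ s
      rwa [hs.star_eq, hss] at h4
    obtain ⟨hre, him⟩ := Complex.nonneg_iff.mp hφa
    rw [Complex.le_def]
    refine ⟨?_, by simp [← him]⟩
    simp only [Complex.ofReal_re]
    nlinarith [norm_nonneg (φ (u * a)), h3, hre]
  · intro hyp b'
    have key : ∀ h : A, IsSelfAdjoint h → a * h = h * a := by
      intro h hh
      have hw : IsSelfAdjoint (Complex.I • (h * a - a * h)) := by
        have hst : star (h * a - a * h) = -(h * a - a * h) := by
          rw [star_sub, star_mul, star_mul, ha.star_eq, hh.star_eq]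
          abel
        rw [IsSelfAdjoint, star_smul, Complex.star_def, Complex.conj_I, hst,
          neg_smul, smul_neg, neg_neg]
      have hker : ∀ φ : A →L[ℂ] ℂ, (∀ x : A, 0 ≤ φ (star x * x)) →
          φ (Complex.I • (h * a - a * h)) = 0 := by
        intro φ hφ
        have him1 : (φ (h * a)).im = 0 := im_eq_zero a ha hyp φ hφ hh
        have hherm : φ (a * h) = (starRingEnd ℂ) (φ (h * a)) := by
          have h5 := herm' φ hφ (h * a)
          rwa [star_mul, ha.star_eq, hh.star_eq] at h5
        have h6 : φ (a * h) = φ (h * a) := by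
          rw [hherm]
          exact Complex.conj_eq_iff_im.mpr him1
        rw [map_smul, map_sub, h6, sub_self, smul_zero]
      have h7 := eq_zero_of_all_pos hw hker
      have hsub : h * a - a * h = 0 :=
        (smul_eq_zero.mp h7).resolve_left Complex.I_ne_zero
      exact (sub_eq_zero.mp hsub).symm
    set p := (2⁻¹ : ℝ) • (b' + star b') with hp
    set q := (2⁻¹ : ℝ) • (Complex.I • (star b' - b')) with hq
    have hpsa : IsSelfAdjoint p := by
      rw [IsSelfAdjoint, hp, star_rsmul, star_add, star_star, add_comm (star b')]
    have hqsa : IsSelfAdjoint q := by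
      rw [IsSelfAdjoint, hq, star_rsmul, star_smul, Complex.star_def, Complex.conj_I,
        star_sub, star_star, neg_smul, ← smul_neg, neg_sub]
    have hdecomp : b' = p + Complex.I • q := by
      have hII : Complex.I • Complex.I • (star b' - b') = b' - star b' := by
        rw [smul_smul, Complex.I_mul_I, neg_one_smul, neg_sub]
      rw [hp, hq, smul_comm Complex.I (2⁻¹ : ℝ), hII, ← smul_add]
      have h8 : (b' + star b') + (b' - star b') = (2 : ℝ) • b' := by
        rw [two_smul]; abel
      rw [h8, smul_smul]
      norm_num
    rw [hdecomp, mul_add, add_mul, key p hpsa, mul_smul_comm, key q hqsa,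
      smul_mul_assoc Complex.I q a]
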